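/- Let X be a standard Borel space (a Polish space with its Borel σ-algebra), let D_B be a probability measure on X × {0,1} with no atoms, let Θ be an arbitrary index set, and let D : Θ → ProbabilityMeasures(X × {0,1}) be any map such that for every θ ∈ Θ, D(θ)({(x,y) : y = 1}) = D_B({(x,y) : y = 1}). Then there exist functions T⁰, T¹ : Θ → X → X, with T⁰(θ) and T¹(θ) measurable for each θ, such that for every θ ∈ Θ the pushforward of D_B under (x,y) ↦ (T^y(θ)(x), y) equals D(θ). (Any distribution map preserving the label marginal can be microfounded by agent response functions.) -/

import Mathlib

open MeasureTheory

open Set Filter Topology ProbabilityTheory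
open scoped ENNReal

/-- For an atomless probability measure `μ` on `ℝ` and `t ∈ [0,1]`,
`μ {cdf μ ≤ t} = t` (the cdf pushes `μ` to the uniform distribution). -/
lemma measure_cdf_le_aux (μ : Measure ℝ) [IsProbabilityMeasure μ]
    (hatom : ∀ x : ℝ, μ {x} = 0) {t : ℝ} (ht0 : 0 ≤ t) (ht1 : t ≤ 1) :
    μ {a | cdf μ a ≤ t} = ENNReal.ofReal t := by
  rcases eq_or_lt_of_le ht1 with rfl | ht1
  · have : {a | cdf μ a ≤ 1} = univ := eq_univ_of_forall fun a => cdf_le_one μ a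
    simp [this]
  -- t < 1
  obtain ⟨b, hb⟩ : ∃ b, t < cdf μ b := by
    have := (tendsto_cdf_atTop μ).eventually (eventually_gt_nhds ht1)
    exact this.exists
  set C := {a | cdf μ a ≤ t} with hC
  rcases C.eq_empty_or_nonempty with hCe | hCne
  · have ht0' : t = 0 := by
      by_contra h
      have htpos : 0 < t := lt_of_le_of_ne ht0 (Ne.symm h)
      obtain ⟨a, ha⟩ : ∃ a, cdf μ a < t :=
        ((tendsto_cdf_atBot μ).eventually (eventually_lt_nhds htpos)).exists
      have haC : a ∈ C := ha.le
      rw [hCe] at haC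
      exact haC
    simp [hCe, ht0']
  have hbdd : BddAbove C := ⟨b, fun a ha => by
    by_contra h
    exact absurd ((monotone_cdf μ) (le_of_not_ge h)) (not_le.mpr (lt_of_le_of_lt ha hb))⟩
  set c := sSup C with hc
  have hIio : Iio c ⊆ C := by
    intro a ha
    obtain ⟨d, hd, had⟩ := exists_lt_of_lt_csSup hCne ha
    exact le_trans ((monotone_cdf μ) had.le) hd
  -- μ (Iio c) ≤ ofReal t
  have hIioUnion : Iio c = ⋃ n : ℕ, Iic (c - 1 / (n + 1)) := by
    ext a
    simp only [mem_Iio, mem_iUnion, mem_Iic]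
    constructor
    · intro ha
      obtain ⟨n, hn⟩ := exists_nat_one_div_lt (sub_pos.mpr ha)
      exact ⟨n, by linarith⟩
    · rintro ⟨n, hn⟩
      have : (0:ℝ) < 1 / (n + 1) := by positivity
      linarith
  have hμIio : μ (Iio c) ≤ ENNReal.ofReal t := by
    rw [hIioUnion, Directed.measure_iUnion]
    · refine iSup_le fun n => ?_
      have hmem : (c - 1 / (n + 1)) ∈ C := hIio (by
        have : (0:ℝ) < 1 / (n + 1) := by positivity
        simp only [mem_Iio]; linarith)
      rw [← ofReal_cdf μ]
      exact ENNReal.ofReal_le_ofReal hmem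
    · have hmono : ∀ m n : ℕ, m ≤ n → c - 1 / (m + 1) ≤ c - 1 / (n + 1) := by
        intro m n h
        have h1 : (1:ℝ) / (n + 1) ≤ 1 / (m + 1) :=
          one_div_le_one_div_of_le (by positivity)
            (by have := (Nat.cast_le (α := ℝ)).mpr h; linarith)
        linarith
      intro m n
      exact ⟨max m n, Iic_subset_Iic.mpr (hmono _ _ (le_max_left m n)),
        Iic_subset_Iic.mpr (hmono _ _ (le_max_right m n))⟩
  have hIic : μ (Iic c) ≤ ENNReal.ofReal t := by
    have : Iic c = Iio c ∪ {c} := by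
      ext x; simp [le_iff_lt_or_eq]
    rw [this]
    calc μ (Iio c ∪ {c}) ≤ μ (Iio c) + μ {c} := measure_union_le _ _
      _ = μ (Iio c) := by rw [hatom c, add_zero]
      _ ≤ ENNReal.ofReal t := hμIio
  have hcC : c ∈ C := by
    by_contra h
    have hFc : t < cdf μ c := not_le.mp h
    have : ENNReal.ofReal (cdf μ c) ≤ ENNReal.ofReal t := by
      rw [ofReal_cdf μ c]; exact hIic
    have := (ENNReal.ofReal_le_ofReal_iff ht0).mp this
    linarith
  have hFct : cdf μ c = t := by
    refine le_antisymm hcC ?_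
    by_contra h
    have hFc : cdf μ c < t := not_le.mp h
    have hrc : ContinuousWithinAt (cdf μ) (Ici c) c := (cdf μ).right_continuous c
    have hrc' : Tendsto (cdf μ) (𝓝[>] c) (𝓝 (cdf μ c)) :=
      hrc.tendsto.mono_left (nhdsWithin_mono c Ioi_subset_Ici_self)
    have hev : ∀ᶠ y in 𝓝[>] c, cdf μ y < t := hrc'.eventually (eventually_lt_nhds hFc)
    obtain ⟨y, hy1, hy2⟩ := (hev.and self_mem_nhdsWithin).exists
    exact absurd (le_csSup hbdd (hy1.le : y ∈ C)) (not_le.mpr hy2)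
  -- conclude
  refine le_antisymm ?_ ?_
  · exact le_trans (measure_mono fun a ha => (le_csSup hbdd ha : a ∈ Iic c)) hIic
  · calc ENNReal.ofReal t = ENNReal.ofReal (cdf μ c) := by rw [hFct]
      _ = μ (Iic c) := ofReal_cdf μ c
      _ ≤ μ (Iio c) + μ {c} := by
          rw [show Iic c = Iio c ∪ {c} by ext x; simp [le_iff_lt_or_eq]]
          exact measure_union_le _ _
      _ = μ (Iio c) := by rw [hatom c, add_zero]
      _ ≤ μ C := measure_mono hIio

lemma exists_map_real_aux (μ ν : Measure ℝ) [IsProbabilityMeasure μ] [IsProbabilityMeasure ν]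
    (hatom : ∀ x : ℝ, μ {x} = 0) :
    ∃ f : ℝ → ℝ, Measurable f ∧ Measure.map f μ = ν := by
  classical
  set G : ℝ → ℝ := fun u => sInf {y : ℝ | u ≤ cdf ν y} with hG
  -- Galois connection for the quantile function
  have galois : ∀ u x : ℝ, 0 < u → u < 1 → (G u ≤ x ↔ u ≤ cdf ν x) := by
    intro u x hu0 hu1
    have hne : {y : ℝ | u ≤ cdf ν y}.Nonempty := by
      obtain ⟨y, hy⟩ := ((tendsto_cdf_atTop ν).eventually (eventually_gt_nhds hu1)).exists
      exact ⟨y, hy.le⟩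
    have hbdd : BddBelow {y : ℝ | u ≤ cdf ν y} := by
      obtain ⟨z, hz⟩ := ((tendsto_cdf_atBot ν).eventually (eventually_lt_nhds hu0)).exists
      refine ⟨z, fun y hy => ?_⟩
      by_contra h
      exact absurd (le_trans hy ((monotone_cdf ν) (le_of_not_ge h))) (not_le.mpr hz)
    constructor
    · intro hGx
      have key : u ≤ cdf ν (G u) := by
        have hrc : Tendsto (cdf ν) (𝓝[>] (G u)) (𝓝 (cdf ν (G u))) :=
          ((cdf ν).right_continuous (G u)).tendsto.mono_left
            (nhdsWithin_mono _ Ioi_subset_Ici_self)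
        refine ge_of_tendsto hrc ?_
        filter_upwards [self_mem_nhdsWithin] with w hw
        obtain ⟨y, hy, hyw⟩ := exists_lt_of_csInf_lt hne hw
        exact le_trans hy ((monotone_cdf ν) hyw.le)
      exact le_trans key ((monotone_cdf ν) hGx)
    · intro h
      exact csInf_le hbdd h
  set f : ℝ → ℝ := fun a =>
    if 0 < cdf μ a ∧ cdf μ a < 1 then G (cdf μ a) else 0 with hf
  have hFmeas : Measurable fun a => (cdf μ a : ℝ) := (monotone_cdf μ).measurable
  -- key preimage identity
  have hpre : ∀ x : ℝ, f ⁻¹' Iic x =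
      ({a | 0 < cdf μ a ∧ cdf μ a < 1} ∩ {a | cdf μ a ≤ cdf ν x}) ∪
      ({a | 0 < cdf μ a ∧ cdf μ a < 1}ᶜ ∩ {a : ℝ | (0:ℝ) ≤ x}) := by
    intro x
    ext a
    by_cases h : 0 < cdf μ a ∧ cdf μ a < 1
    · simp only [mem_preimage, mem_Iic, hf, if_pos h, mem_union, mem_inter_iff, mem_setOf_eq,
        mem_compl_iff, h, not_true_eq_false, false_and, or_false, true_and]
      exact galois _ x h.1 h.2
    · simp only [mem_preimage, mem_Iic, hf, mem_union, mem_inter_iff, mem_setOf_eq,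
        mem_compl_iff, h, not_false_eq_true, true_and, false_and, false_or, if_false]
  have hfmeas : Measurable f := by
    apply measurable_of_Iic
    intro x
    rw [hpre x]
    have hU : MeasurableSet {a : ℝ | 0 < cdf μ a ∧ cdf μ a < 1} :=
      (hFmeas measurableSet_Ioi).inter (hFmeas measurableSet_Iio)
    exact (hU.inter (hFmeas measurableSet_Iic)).union
      (hU.compl.inter (MeasurableSet.const _))
  refine ⟨f, hfmeas, ?_⟩
  -- the bad set is null
  have hnull : μ {a : ℝ | 0 < cdf μ a ∧ cdf μ a < 1}ᶜ = 0 := by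
    have hsub : {a : ℝ | 0 < cdf μ a ∧ cdf μ a < 1}ᶜ ⊆
        {a | cdf μ a ≤ (0:ℝ)} ∪ {a | 1 ≤ cdf μ a} := by
      intro a ha
      simp only [mem_compl_iff, mem_setOf_eq, not_and_or, not_lt] at ha
      rcases ha with h | h
      · exact Or.inl h
      · exact Or.inr h
    refine measure_mono_null hsub (measure_union_null ?_ ?_)
    · simpa using measure_cdf_le_aux μ hatom (le_refl (0:ℝ)) zero_le_one
    · -- {1 ≤ cdf μ} is null
      have hlt : μ {a | cdf μ a < 1} = 1 := by
        refine le_antisymm (le_trans (measure_mono (subset_univ _)) (by simp)) ?_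
        have hsub2 : ∀ n : ℕ, {a | cdf μ a ≤ 1 - 1 / (n + 1)} ⊆ {a | cdf μ a < 1} := by
          intro n a ha
          simp only [mem_setOf_eq] at ha ⊢
          have : (0:ℝ) < 1 / (n + 1) := by positivity
          linarith
        have hseq : ∀ n : ℕ, ENNReal.ofReal (1 - 1 / (n + 1)) ≤ μ {a | cdf μ a < 1} := by
          intro n
          have h1 : (0:ℝ) ≤ 1 - 1 / (n + 1) := by
            have h2 : (1:ℝ) / (n + 1) ≤ 1 := by
              rw [div_le_one (by positivity)]; linarith [Nat.cast_nonneg (α := ℝ) n]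
            linarith
          rw [← measure_cdf_le_aux μ hatom h1 (by
            have : (0:ℝ) < 1 / (n + 1) := by positivity
            linarith)]
          exact measure_mono (hsub2 n)
        have htend : Tendsto (fun n : ℕ => ENNReal.ofReal (1 - 1 / (n + 1)))
            atTop (𝓝 (1 : ℝ≥0∞)) := by
          rw [show (1 : ℝ≥0∞) = ENNReal.ofReal 1 by simp]
          apply ENNReal.tendsto_ofReal
          have := tendsto_one_div_add_atTop_nhds_zero_nat (𝕜 := ℝ)
          have h := this.const_sub 1
          simpa using h
        exact le_of_tendsto htend (Eventually.of_forall hseq)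
      have hm : MeasurableSet {a : ℝ | cdf μ a < 1} := hFmeas measurableSet_Iio
      have : {a : ℝ | 1 ≤ cdf μ a} = {a : ℝ | cdf μ a < 1}ᶜ := by
        ext a; simp [not_lt]
      rw [this, measure_compl hm (measure_ne_top μ _), hlt, measure_univ, tsub_self]
  -- conclude by cdf extensionality
  have : IsProbabilityMeasure (Measure.map f μ) := Measure.isProbabilityMeasure_map hfmeas.aemeasurable
  refine Measure.ext_of_Iic (Measure.map f μ) ν fun x => ?_
  rw [Measure.map_apply hfmeas measurableSet_Iic, hpre x]
  have hB : μ ({a | 0 < cdf μ a ∧ cdf μ a < 1}ᶜ ∩ {a : ℝ | (0:ℝ) ≤ x}) = 0 :=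
    measure_mono_null inter_subset_left hnull
  have h1 : μ ({a | 0 < cdf μ a ∧ cdf μ a < 1} ∩ {a | cdf μ a ≤ cdf ν x} ∪
      {a | 0 < cdf μ a ∧ cdf μ a < 1}ᶜ ∩ {a : ℝ | (0:ℝ) ≤ x}) =
      μ ({a | 0 < cdf μ a ∧ cdf μ a < 1} ∩ {a | cdf μ a ≤ cdf ν x}) := by
    refine le_antisymm (le_trans (measure_union_le _ _) ?_) (measure_mono subset_union_left)
    rw [hB, add_zero]
  rw [h1, inter_comm, measure_inter_conull hnull]
  rw [measure_cdf_le_aux μ hatom (cdf_nonneg ν x) (cdf_le_one ν x), ofReal_cdf]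

lemma exists_map_prob_aux {X : Type*} [MeasurableSpace X] [StandardBorelSpace X] [Nonempty X]
    (μ ν : Measure X) [IsProbabilityMeasure μ] [IsProbabilityMeasure ν]
    (hatom : ∀ x : X, μ {x} = 0) :
    ∃ f : X → X, Measurable f ∧ Measure.map f μ = ν := by
  classical
  obtain ⟨s, hs, ⟨e⟩⟩ := exists_subset_real_measurableEquiv X
  set j : X → ℝ := fun x => (e x : ℝ) with hj
  have hjemb : MeasurableEmbedding j :=
    (MeasurableEmbedding.subtype_coe hs).comp e.measurableEmbedding
  have hjm : Measurable j := hjemb.measurable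
  set r : ℝ → X := fun t => if h : t ∈ s then e.symm ⟨t, h⟩ else Classical.arbitrary X with hr
  have hrm : Measurable r := by
    rw [hr]
    exact Measurable.dite (f := fun t : s => e.symm t)
      (g := fun _ : (sᶜ : Set ℝ) => Classical.arbitrary X)
      e.symm.measurable measurable_const hs
  have hrj : ∀ x : X, r (j x) = x := by
    intro x
    have hmem : j x ∈ s := (e x).2
    simp only [hr, dif_pos hmem, hj]
    rw [dif_pos (e x).2]; exact e.symm_apply_apply x
  haveI : IsProbabilityMeasure (Measure.map j μ) := Measure.isProbabilityMeasure_map hjm.aemeasurable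
  haveI : IsProbabilityMeasure (Measure.map j ν) := Measure.isProbabilityMeasure_map hjm.aemeasurable
  have hatom' : ∀ t : ℝ, Measure.map j μ {t} = 0 := by
    intro t
    rw [Measure.map_apply hjm (measurableSet_singleton t)]
    rcases (j ⁻¹' {t}).eq_empty_or_nonempty with h | ⟨x, hx⟩
    · simp [h]
    · have hsub : j ⁻¹' {t} ⊆ {x} := by
        intro y hy
        have : j y = j x := by
          simp only [mem_preimage, mem_singleton_iff] at hy hx
          rw [hy, hx]
        exact mem_singleton_iff.mpr (hjemb.injective this)
      exact measure_mono_null hsub (hatom x)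
  obtain ⟨g, hgm, hgmap⟩ := exists_map_real_aux (Measure.map j μ) (Measure.map j ν) hatom'
  refine ⟨r ∘ g ∘ j, hrm.comp (hgm.comp hjm), ?_⟩
  have : Measure.map (r ∘ g ∘ j) μ = Measure.map r (Measure.map g (Measure.map j μ)) := by
    rw [Measure.map_map hrm hgm, Measure.map_map (hrm.comp hgm) hjm]
    rfl
  rw [this, hgmap, Measure.map_map hrm hjm]
  have : r ∘ j = id := funext hrj
  rw [this, Measure.map_id]

lemma exists_map_fin_aux {X : Type*} [MeasurableSpace X] [StandardBorelSpace X] [Nonempty X]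
    (μ ν : Measure X) [IsFiniteMeasure μ] [IsFiniteMeasure ν]
    (hatom : ∀ x : X, μ {x} = 0) (hm : μ univ = ν univ) :
    ∃ f : X → X, Measurable f ∧ Measure.map f μ = ν := by
  rcases eq_or_ne (μ univ) 0 with h0 | h0
  · have hμ : μ = 0 := Measure.measure_univ_eq_zero.mp h0
    have hν : ν = 0 := Measure.measure_univ_eq_zero.mp (hm ▸ h0)
    exact ⟨id, measurable_id, by rw [Measure.map_id, hμ, hν]⟩
  set c := μ univ with hc
  have hcne : c ≠ ⊤ := measure_ne_top μ _
  haveI hμ' : IsProbabilityMeasure (c⁻¹ • μ) :=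
    ⟨by rw [Measure.smul_apply, smul_eq_mul, ← hc, ENNReal.inv_mul_cancel h0 hcne]⟩
  haveI hν' : IsProbabilityMeasure (c⁻¹ • ν) :=
    ⟨by rw [Measure.smul_apply, smul_eq_mul, ← hm, ENNReal.inv_mul_cancel h0 hcne]⟩
  have hatom' : ∀ x : X, (c⁻¹ • μ) {x} = 0 := fun x => by
    rw [Measure.smul_apply, hatom x, smul_eq_mul, mul_zero]
  obtain ⟨f, hfm, hfmap⟩ := exists_map_prob_aux (c⁻¹ • μ) (c⁻¹ • ν) hatom'
  refine ⟨f, hfm, ?_⟩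
  have h1 : Measure.map f (c⁻¹ • μ) = c⁻¹ • Measure.map f μ := by
    simp [Measure.map_smul]
  rw [h1] at hfmap
  calc Measure.map f μ = c • (c⁻¹ • Measure.map f μ) := by
        rw [smul_smul, ENNReal.mul_inv_cancel h0 hcne, one_smul]
    _ = c • (c⁻¹ • ν) := by rw [hfmap]
    _ = ν := by rw [smul_smul, ENNReal.mul_inv_cancel h0 hcne, one_smul]

/-- Proposition 5 (any distribution map preserving the label marginal can be
microfounded): for a non-atomic base distribution on a standard Borel feature space, there
are per-label response functions T⁰(θ), T¹(θ) whose induced pushforward of the base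
distribution realizes the given distribution map. -/
theorem stmt8 {X : Type*} [MeasurableSpace X] [StandardBorelSpace X]
    (DB : Measure (X × Bool)) [IsProbabilityMeasure DB]
    (hDBatomless : ∀ p : X × Bool, DB {p} = 0)
    {Θ : Type*} (D : Θ → Measure (X × Bool))
    (hDprob : ∀ θ, IsProbabilityMeasure (D θ))
    (hmarg : ∀ θ, D θ {p : X × Bool | p.2 = true} = DB {p : X × Bool | p.2 = true}) :
    ∃ T : Bool → Θ → X → X,
      (∀ y θ, Measurable (T y θ)) ∧
      ∀ θ, Measure.map (fun p : X × Bool => (T p.2 θ p.1, p.2)) DB = D θ := by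
  classical
  haveI : Nonempty X := by
    by_contra h
    rw [not_nonempty_iff] at h
    have huniv : (univ : Set (X × Bool)) = ∅ :=
      eq_empty_iff_forall_notMem.mpr fun p _ => h.elim p.1
    have := measure_univ (μ := DB)
    rw [huniv] at this
    simp at this
  -- the label sets
  set Sy : Bool → Set (X × Bool) := fun y => {p | p.2 = y} with hSy
  have hSymeas : ∀ y, MeasurableSet (Sy y) := fun y =>
    measurable_snd (measurableSet_singleton y)
  -- per-label feature measures
  set base : Bool → Measure X := fun y => Measure.map Prod.fst (DB.restrict (Sy y)) with hbase
  set tgt : Θ → Bool → Measure X := fun θ y =>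
    Measure.map Prod.fst ((D θ).restrict (Sy y)) with htgt
  -- the key identity relating product sets
  have hfiber : ∀ (y : Bool) (t : Set X) (ρ : Measure (X × Bool)), MeasurableSet t →
      (Measure.map Prod.fst (ρ.restrict (Sy y))) t = ρ ((fun p : X × Bool => p.1) ⁻¹' t ∩ Sy y) :=
    fun y t ρ ht => by
      rw [Measure.map_apply measurable_fst ht, Measure.restrict_apply (measurable_fst ht)]
  have key : ∀ (y : Bool) (θ : Θ), ∃ f : X → X, Measurable f ∧
      Measure.map f (base y) = tgt θ y := by
    intro y θ
    haveI := hDprob θ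
    haveI : IsFiniteMeasure (base y) := by
      rw [hbase]; infer_instance
    haveI : IsFiniteMeasure (tgt θ y) := by
      rw [htgt]; infer_instance
    apply exists_map_fin_aux
    · intro x
      rw [hbase]
      have h1 : (Measure.map Prod.fst (DB.restrict (Sy y))) {x}
          = DB ((fun p : X × Bool => p.1) ⁻¹' {x} ∩ Sy y) :=
        hfiber y {x} DB (measurableSet_singleton x)
      have h2 : (fun p : X × Bool => p.1) ⁻¹' {x} ∩ Sy y = {(x, y)} := by
        ext p
        simp only [mem_inter_iff, mem_preimage, mem_singleton_iff, hSy, mem_setOf_eq]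
        constructor
        · rintro ⟨h1', h2'⟩; exact Prod.ext h1' h2'
        · rintro rfl; exact ⟨rfl, rfl⟩
      simp only [h1, h2, hDBatomless]
    · -- equal masses
      have hb : (base y) univ = DB (Sy y) := by
        rw [hbase, Measure.map_apply measurable_fst MeasurableSet.univ, preimage_univ,
          Measure.restrict_apply MeasurableSet.univ, univ_inter]
      have ht : (tgt θ y) univ = D θ (Sy y) := by
        rw [htgt, Measure.map_apply measurable_fst MeasurableSet.univ, preimage_univ,
          Measure.restrict_apply MeasurableSet.univ, univ_inter]
      rw [hb, ht]
      cases y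
      · have hcompl : Sy false = (Sy true)ᶜ := by
          ext p; simp [hSy]
        rw [hcompl, measure_compl (hSymeas true) (measure_ne_top _ _),
          measure_compl (hSymeas true) (measure_ne_top _ _), measure_univ, measure_univ,
          hmarg θ]
      · exact (hmarg θ).symm
  refine ⟨fun y θ => (key y θ).choose, fun y θ => (key y θ).choose_spec.1, ?_⟩
  intro θ
  haveI := hDprob θ
  set T : Bool → Θ → X → X := fun y θ => (key y θ).choose with hT
  have hTmeas : ∀ y θ, Measurable (T y θ) := fun y θ => (key y θ).choose_spec.1
  have hTmap : ∀ y θ, Measure.map (T y θ) (base y) = tgt θ y :=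
    fun y θ => (key y θ).choose_spec.2
  set g : X × Bool → X × Bool := fun p => (T p.2 θ p.1, p.2) with hg
  have hgfst : (fun p : X × Bool => T p.2 θ p.1) =
      fun p : X × Bool => if p.2 = true then T true θ p.1 else T false θ p.1 := by
    funext p
    cases hp : p.2 <;> simp [hp]
  have hgm : Measurable g := by
    refine Measurable.prod ?_ measurable_snd
    rw [show (fun p : X × Bool => (g p).1) = fun p : X × Bool => T p.2 θ p.1 from rfl, hgfst]
    exact Measurable.ite (measurable_snd (measurableSet_singleton true))
      ((hTmeas true θ).comp measurable_fst) ((hTmeas false θ).comp measurable_fst)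
  refine Measure.ext fun s hs => ?_
  rw [Measure.map_apply hgm hs]
  -- decompose over labels
  have hdec : ∀ (ρ : Measure (X × Bool)) (t : Set X × Bool → Prop), True := fun _ _ => trivial
  have hsplit : ∀ (ρ : Measure (X × Bool)) (t : Set (X × Bool)), MeasurableSet t →
      ρ t = ρ (t ∩ Sy true) + ρ (t ∩ Sy false) := by
    intro ρ t htm
    have h1 : t ∩ Sy false = t \ Sy true := by
      ext p
      simp only [hSy, mem_inter_iff, mem_setOf_eq, mem_diff]
      cases hp : p.2 <;> simp [hp]
    rw [h1, measure_inter_add_diff t (hSymeas true)]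
  rw [hsplit DB _ (hgm hs), hsplit (D θ) s hs]
  have piece : ∀ y : Bool, DB (g ⁻¹' s ∩ Sy y) = D θ (s ∩ Sy y) := by
    intro y
    set sy : Set X := (fun x => (x, y)) ⁻¹' s with hsy
    have hsym : MeasurableSet sy := (measurable_id.prodMk measurable_const) hs
    have e1 : (fun p : X × Bool => p.1) ⁻¹' (T y θ ⁻¹' sy) ∩ Sy y = g ⁻¹' s ∩ Sy y := by
      ext p
      simp only [mem_inter_iff, mem_preimage, hSy, mem_setOf_eq, hsy, hg]
      constructor
      · rintro ⟨h1, rfl⟩; exact ⟨h1, rfl⟩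
      · rintro ⟨h1, rfl⟩; exact ⟨h1, rfl⟩
    have e2 : (fun p : X × Bool => p.1) ⁻¹' sy ∩ Sy y = s ∩ Sy y := by
      ext p
      simp only [mem_inter_iff, mem_preimage, hSy, mem_setOf_eq, hsy]
      constructor
      · rintro ⟨h1, rfl⟩; exact ⟨h1, rfl⟩
      · rintro ⟨h1, rfl⟩; exact ⟨h1, rfl⟩
    calc DB (g ⁻¹' s ∩ Sy y)
        = DB ((fun p : X × Bool => p.1) ⁻¹' (T y θ ⁻¹' sy) ∩ Sy y) := by rw [e1]
      _ = (base y) (T y θ ⁻¹' sy) := (hfiber y _ DB ((hTmeas y θ) hsym)).symm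
      _ = (Measure.map (T y θ) (base y)) sy := (Measure.map_apply (hTmeas y θ) hsym).symm
      _ = (tgt θ y) sy := by rw [hTmap y θ]
      _ = D θ ((fun p : X × Bool => p.1) ⁻¹' sy ∩ Sy y) := hfiber y sy (D θ) hsym
      _ = D θ (s ∩ Sy y) := by rw [e2]
  rw [piece true, piece false]
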